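/- (Closed-form expansion of the TAID recursion.) Under the TAID regression recursion, write A_τ := D(λ_τ I + D)^{-1}. Then for every integer t with 1 ≤ t ≤ T − 1, one has z̃_t = Ā_t z_0, where Ā_t := (T!/(T^{t+1}·(T−t−1)!))·∏_{τ=0}^{t−1} A_τ + Σ_{τ=1}^{t−1} ((t−τ)·(T−t+τ−1)!/(T^{τ+1}·(T−t−1)!))·∏_{s=1}^{τ} A_{t−s} + (t/T)·I. -/

import Mathlib

/-- (Closed-form expansion of the TAID recursion.) With
`A τ := D (λ_τ I + D)⁻¹`, for every `1 ≤ t ≤ T − 1` one has `z̃ t = Ā_t z0`, where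
`Ā_t := (T!/(T^{t+1}·(T−t−1)!))·∏_{τ=0}^{t−1} A_τ
      + Σ_{τ=1}^{t−1} ((t−τ)·(T−t+τ−1)!/(T^{τ+1}·(T−t−1)!))·∏_{s=1}^{τ} A_{t−s}
      + (t/T)·I`. -/
theorem taid_closed_form_expansion
    (N T : ℕ) (hN : 1 ≤ N) (hT : 1 ≤ T) (ε : ℝ) (hε : 0 < ε)
    (d : Fin N → ℝ) (hd : ∀ k, 0 < d k)
    (lam : ℕ → ℝ) (hlam : ∀ τ, 0 ≤ lam τ)
    (z0 : EuclideanSpace ℝ (Fin N))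
    (z ztilde : ℕ → EuclideanSpace ℝ (Fin N))
    (A : ℕ → Matrix (Fin N) (Fin N) ℝ)
    (hA : ∀ τ : ℕ, A τ = (Matrix.diagonal d) *
      (lam τ • (1 : Matrix (Fin N) (Fin N) ℝ) + Matrix.diagonal d)⁻¹)
    (hz0 : ztilde 0 = z0)
    (hz : ∀ τ : ℕ, z (τ + 1) = (A τ).mulVec (ztilde τ))
    (hzt : ∀ τ : ℕ, ztilde (τ + 1) =
      (1 - ((τ + 1 : ℕ) : ℝ) / (T : ℝ)) • z (τ + 1) + (((τ + 1 : ℕ) : ℝ) / (T : ℝ)) • z0) :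
    ∀ t : ℕ, 1 ≤ t → t ≤ T - 1 →
      ztilde t =
        (((T.factorial : ℝ) / ((T : ℝ) ^ (t + 1) * ((T - t - 1).factorial : ℝ))) •
            ((List.range t).map A).prod
         + ∑ τ ∈ Finset.Ico 1 t,
            ((((t - τ : ℕ) : ℝ) * ((T - t + τ - 1).factorial : ℝ)) /
                ((T : ℝ) ^ (τ + 1) * ((T - t - 1).factorial : ℝ))) •
              ((List.range τ).map (fun s => A (t - (s + 1)))).prod
         + ((t : ℝ) / (T : ℝ)) • (1 : Matrix (Fin N) (Fin N) ℝ)).mulVec z0 := by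
  -- A τ is a diagonal matrix
  have hAdiag : ∀ τ, A τ = Matrix.diagonal (fun k => d k * (lam τ + d k)⁻¹) := by
    intro τ
    rw [hA τ]
    have h1 : lam τ • (1 : Matrix (Fin N) (Fin N) ℝ) + Matrix.diagonal d
        = Matrix.diagonal (fun k => lam τ + d k) := by
      ext i j
      by_cases h : i = j <;> simp [Matrix.diagonal_apply, Matrix.one_apply, h]
    have h2 : (Matrix.diagonal (fun k => lam τ + d k))⁻¹
        = Matrix.diagonal (fun k => (lam τ + d k)⁻¹) := by
      apply Matrix.inv_eq_right_inv
      have hfun : (fun k : Fin N => (lam τ + d k) * (lam τ + d k)⁻¹) = fun _ => (1 : ℝ) :=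
        funext fun k => mul_inv_cancel₀ (by have := hd k; have := hlam τ; positivity)
      rw [Matrix.diagonal_mul_diagonal, hfun, Matrix.diagonal_one]
    rw [h1, h2, Matrix.diagonal_mul_diagonal]
  -- the A's commute pairwise
  have hcomm : ∀ i j, Commute (A i) (A j) := by
    intro i j
    rw [hAdiag i, hAdiag j]
    unfold Commute SemiconjBy
    rw [Matrix.diagonal_mul_diagonal, Matrix.diagonal_mul_diagonal]
    have : (fun k => d k * (lam i + d k)⁻¹ * (d k * (lam j + d k)⁻¹))
        = fun k => d k * (lam j + d k)⁻¹ * (d k * (lam i + d k)⁻¹) := by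
      funext k; ring
    rw [this]
  -- pulling the last factor of the full product to the front
  have hP : ∀ t : ℕ, ((List.range (t+1)).map A).prod = A t * ((List.range t).map A).prod := by
    intro t
    rw [List.range_succ, List.map_append, List.prod_append]
    simp only [List.map_cons, List.map_nil, List.prod_cons, List.prod_nil, mul_one]
    exact ((Commute.list_prod_right _ _ (by
      intro x hx
      simp only [List.mem_map, List.mem_range] at hx
      obtain ⟨i, -, rfl⟩ := hx
      exact (hcomm t i))).eq).symm
  -- pulling the first factor of the partial products to the front
  have hQ : ∀ t τ : ℕ, ((List.range (τ+1)).map (fun s => A (t + 1 - (s+1)))).prod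
      = A t * ((List.range τ).map (fun s => A (t - (s+1)))).prod := by
    intro t τ
    have h1 : ((fun s => A (t + 1 - (s + 1))) ∘ Nat.succ) = fun s => A (t - (s+1)) := by
      funext s
      simp only [Function.comp, Nat.succ_eq_add_one]
      have h : t + 1 - (s + 1 + 1) = t - (s + 1) := by omega
      rw [h]
    rw [List.range_succ_eq_map, List.map_cons, List.prod_cons, List.map_map, h1]
    norm_num
  intro t
  induction t with
  | zero => intro h; omega
  | succ t ih =>
    intro _ hle
    have hT2 : t + 2 ≤ T := by omega
    by_cases ht0 : t = 0
    · -- base case: t = 1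
      subst ht0
      obtain ⟨n, rfl⟩ : ∃ n, T = 2 + n := ⟨T - 2, by omega⟩
      rw [hzt 0, WithLp.ofLp_add, WithLp.ofLp_smul, WithLp.ofLp_smul, hz 0, hz0]
      have hTne : ((2 + n : ℕ) : ℝ) ≠ 0 := by positivity
      have hfne : ((n.factorial : ℝ)) ≠ 0 := by positivity
      have hone : ((List.range (0+1)).map A).prod = A 0 := by rw [hP 0]; simp
      rw [hone, show Finset.Ico 1 (0+1) = ∅ from by simp, Finset.sum_empty, add_zero,
        show 2 + n - (0+1) - 1 = n from by omega]
      have hc : ((2+n).factorial : ℝ) / (((2+n : ℕ) : ℝ) ^ (0+1+1) * (n.factorial : ℝ))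
          = 1 - ((0+1 : ℕ) : ℝ) / ((2+n : ℕ) : ℝ) := by
        rw [show (2+n).factorial = (n+2) * ((n+1) * n.factorial) from by
          rw [show 2 + n = (n+1)+1 from by omega, Nat.factorial_succ, Nat.factorial_succ]]
        push_cast
        field_simp
        ring
      rw [hc, Matrix.add_mulVec, Matrix.smul_mulVec, Matrix.smul_mulVec,
        Matrix.one_mulVec]
    · -- inductive step
      have ht1 : 1 ≤ t := by omega
      have ihh := ih ht1 (by omega)
      rw [hzt t, WithLp.ofLp_add, WithLp.ofLp_smul, WithLp.ofLp_smul, hz t, ihh, Matrix.mulVec_mulVec]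
      obtain ⟨n, rfl⟩ : ∃ n, T = t + 2 + n := ⟨T - (t+2), by omega⟩
      have hTpos : (0:ℝ) < ((t+2+n : ℕ) : ℝ) := by positivity
      have hTne : ((t+2+n : ℕ) : ℝ) ≠ 0 := ne_of_gt hTpos
      have hfne : ((n.factorial : ℝ)) ≠ 0 := by positivity
      have key :
          (((t+2+n).factorial : ℝ) / (((t+2+n : ℕ) : ℝ) ^ (t + 1 + 1) * (((t+2+n) - (t+1) - 1).factorial : ℝ))) •
            ((List.range (t+1)).map A).prod
          + ∑ τ ∈ Finset.Ico 1 (t+1),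
              ((((t + 1 - τ : ℕ) : ℝ) * (((t+2+n) - (t+1) + τ - 1).factorial : ℝ)) /
                (((t+2+n : ℕ) : ℝ) ^ (τ + 1) * (((t+2+n) - (t+1) - 1).factorial : ℝ))) •
                ((List.range τ).map (fun s => A (t + 1 - (s + 1)))).prod
          + (((t+1 : ℕ) : ℝ) / ((t+2+n : ℕ) : ℝ)) • (1 : Matrix (Fin N) (Fin N) ℝ)
          =
          (1 - ((t + 1 : ℕ) : ℝ) / ((t+2+n : ℕ) : ℝ)) •
            (A t *
              ((((t+2+n).factorial : ℝ) / (((t+2+n : ℕ) : ℝ) ^ (t + 1) * (((t+2+n) - t - 1).factorial : ℝ))) •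
                ((List.range t).map A).prod
              + ∑ τ ∈ Finset.Ico 1 t,
                  ((((t - τ : ℕ) : ℝ) * (((t+2+n) - t + τ - 1).factorial : ℝ)) /
                    (((t+2+n : ℕ) : ℝ) ^ (τ + 1) * (((t+2+n) - t - 1).factorial : ℝ))) •
                    ((List.range τ).map (fun s => A (t - (s + 1)))).prod
              + (((t : ℕ) : ℝ) / ((t+2+n : ℕ) : ℝ)) • (1 : Matrix (Fin N) (Fin N) ℝ)))
          + (((t + 1 : ℕ) : ℝ) / ((t+2+n : ℕ) : ℝ)) • (1 : Matrix (Fin N) (Fin N) ℝ) := by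
        simp only [show ∀ τ:ℕ, (t+2+n) - (t+1) + τ - 1 = n + τ from fun τ => by omega,
          show ∀ τ:ℕ, (t+2+n) - t + τ - 1 = n + 1 + τ from fun τ => by omega,
          show (t+2+n) - (t+1) - 1 = n from by omega,
          show (t+2+n) - t - 1 = n + 1 from by omega]
        rw [hP t]
        rw [Finset.sum_eq_sum_Ico_succ_bot (show (1:ℕ) < t+1 by omega)]
        have hQ1 : ((List.range 1).map (fun s => A (t + 1 - (s+1)))).prod = A t := by
          simp [show List.range 1 = [0] from by decide, show t + 1 - (0+1) = t from by omega]
        rw [hQ1, Finset.sum_Ico_eq_sum_range]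
        rw [mul_add, mul_add, Matrix.mul_smul, Matrix.mul_smul, Matrix.mul_one, Finset.mul_sum]
        simp only [Matrix.mul_smul, smul_add, smul_smul, Finset.smul_sum]
        rw [Finset.sum_Ico_eq_sum_range]
        simp only [← hQ]
        have hsum : ∑ k ∈ Finset.range (t + 1 - (1+1)),
              ((((t + 1 - (1+1+k) : ℕ) : ℝ) * (((n + (1+1+k)).factorial : ℝ))) /
                (((t+2+n : ℕ) : ℝ) ^ ((1+1+k) + 1) * ((n.factorial : ℝ)))) •
                ((List.range (1+1+k)).map (fun s => A (t + 1 - (s + 1)))).prod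
            = ∑ k ∈ Finset.range (t - 1),
                ((1 - ((t + 1 : ℕ) : ℝ) / ((t+2+n : ℕ) : ℝ)) *
                  ((((t - (1+k) : ℕ) : ℝ) * (((n + 1 + (1+k)).factorial : ℝ))) /
                    (((t+2+n : ℕ) : ℝ) ^ ((1+k) + 1) * (((n+1).factorial : ℝ))))) •
                  ((List.range ((1+k)+1)).map (fun s => A (t + 1 - (s + 1)))).prod := by
          rw [show t + 1 - (1+1) = t - 1 from by omega]
          refine Finset.sum_congr rfl (fun k hk => ?_)
          simp only [Finset.mem_range] at hk
          rw [show 1+1+k = (1+k)+1 from by omega]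
          congr 1
          rw [show t + 1 - ((1+k)+1) = t - (1+k) from by omega,
            show n + ((1+k)+1) = n + 1 + (1+k) from by omega,
            Nat.factorial_succ n]
          push_cast
          field_simp
          ring
        rw [hsum]
        have hc : (((t+2+n).factorial : ℝ) / (((t+2+n : ℕ) : ℝ) ^ (t + 1 + 1) * ((n.factorial : ℝ)))
            = (1 - ((t + 1 : ℕ) : ℝ) / ((t+2+n : ℕ) : ℝ)) *
              (((t+2+n).factorial : ℝ) / (((t+2+n : ℕ) : ℝ) ^ (t + 1) * (((n+1).factorial : ℝ))))) := by
          rw [Nat.factorial_succ n]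
          push_cast
          field_simp
          ring
        have hb1 : ((((t + 1 - 1 : ℕ) : ℝ) * (((n + 1).factorial : ℝ))) /
              (((t+2+n : ℕ) : ℝ) ^ (1 + 1) * ((n.factorial : ℝ))))
            = (1 - ((t + 1 : ℕ) : ℝ) / ((t+2+n : ℕ) : ℝ)) * (((t : ℕ) : ℝ) / ((t+2+n : ℕ) : ℝ)) := by
          rw [Nat.factorial_succ n, show t + 1 - 1 = t from by omega]
          push_cast
          field_simp
          ring
        rw [hc, hb1]
        abel
      rw [key, Matrix.add_mulVec, Matrix.smul_mulVec, Matrix.smul_mulVec,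
        Matrix.one_mulVec]
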